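/- Let L = GF(2^n) and let p(x) = r_0 x + r_1 x^{2^k} + r_2 x^{2^{2k}} + ... + r_d x^{2^{kd}} be a nonzero polynomial with coefficients r_0, ..., r_d in L, where k is a positive integer with gcd(k, n) = 1. Then p has at most 2^d roots in L. -/

import Mathlib

open Finset

namespace LinAux

variable {K : Type*} [Field K] [CharP K 2]

lemma pow2_injective (t : ℕ) : Function.Injective (fun x : K => x ^ (2 ^ t)) := by
  intro x y h
  have h2 : (x - y) ^ (2 ^ t) = 0 := by
    rw [sub_pow_char_pow]
    simp only at h
    rw [h, sub_self]
  have := pow_eq_zero_iff (pow_ne_zero t (two_ne_zero)) |>.mp h2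
  exact sub_eq_zero.mp this

lemma fix_mul (x : K) (m q : ℕ) (h : x ^ 2 ^ m = x) : x ^ 2 ^ (m * q) = x := by
  induction q with
  | zero => simp
  | succ q ih =>
    have he : 2 ^ (m * (q + 1)) = 2 ^ (m * q) * 2 ^ m := by
      rw [← pow_add, Nat.mul_succ]
    rw [he, pow_mul, ih, h]

lemma fix_gcd (x : K) (a b : ℕ) :
    x ^ 2 ^ a = x → x ^ 2 ^ b = x → x ^ 2 ^ (Nat.gcd a b) = x := by
  induction a, b using Nat.gcd.induction with
  | H0 n => intro _ h; simpa using h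
  | H1 m n hm ih =>
    intro hmx hnx
    rw [Nat.gcd_rec]
    apply ih _ hmx
    have hq : x ^ 2 ^ (m * (n / m)) = x := fix_mul x m (n / m) hmx
    have hsplit : n % m + m * (n / m) = n := Nat.mod_add_div n m
    have hcomp : (x ^ 2 ^ (n % m)) ^ 2 ^ (m * (n / m)) = x := by
      rw [← pow_mul, ← pow_add, hsplit, hnx]
    apply pow2_injective (m * (n / m))
    simp only
    rw [hcomp, hq]


def uAux (k D : ℕ) (r : ℕ → K) (b : K) : ℕ → K
  | 0 => 0
  | (m + 1) => r (D - m) + uAux k D r b m * b ^ (2 ^ (k * (D - m)))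

def sAux (k D : ℕ) (r : ℕ → K) (b : K) (j : ℕ) : K := uAux k D r b (D - j)

lemma sAux_ge (k D : ℕ) (r : ℕ → K) (b : K) (j : ℕ) (hj : D ≤ j) :
    sAux k D r b j = 0 := by
  unfold sAux
  rw [Nat.sub_eq_zero_of_le hj]
  rfl

lemma sAux_rec (k D : ℕ) (r : ℕ → K) (b : K) (j : ℕ) (hj : j < D) :
    sAux k D r b j = r (j + 1) + sAux k D r b (j + 1) * b ^ (2 ^ (k * (j + 1))) := by
  unfold sAux
  have h1 : D - j = (D - (j + 1)) + 1 := by omega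
  rw [h1, uAux]
  rw [show D - (D - (j + 1)) = j + 1 from by omega]

lemma gf_pow_card (n : ℕ) (hn : 0 < n) (x : GaloisField 2 n) : x ^ 2 ^ n = x := by
  haveI : Fintype (GaloisField 2 n) := Fintype.ofFinite _
  have hc : Fintype.card (GaloisField 2 n) = 2 ^ n := by
    rw [← Nat.card_eq_fintype_card]
    exact GaloisField.card 2 n hn.ne'
  have h := FiniteField.pow_card x
  rwa [hc] at h

lemma fixpoint (n k : ℕ) (hn : 0 < n) (hkn : Nat.gcd k n = 1) (x : GaloisField 2 n)
    (h : x ^ 2 ^ k = x) : x = 0 ∨ x = 1 := by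
  have h2 : x ^ 2 ^ Nat.gcd k n = x := fix_gcd x k n h (gf_pow_card n hn x)
  rw [hkn, pow_one] at h2
  have hz : x * (x - 1) = 0 := by ring_nf; linear_combination h2
  rcases mul_eq_zero.mp hz with h | h
  · exact Or.inl h
  · exact Or.inr (by linear_combination h)

lemma key (n k : ℕ) (hn : 0 < n) (hk : 0 < k) (hkn : Nat.gcd k n = 1) :
    ∀ (d : ℕ) (r : ℕ → GaloisField 2 n), (∀ i, d < i → r i = 0) → (∃ i, r i ≠ 0) →
      {x : GaloisField 2 n | ∑ i ∈ Finset.range (d + 1), r i * x ^ 2 ^ (k * i) = 0}.ncard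
        ≤ 2 ^ d := by
  intro d
  induction d with
  | zero =>
    rintro r hsupp ⟨i, hi⟩
    have hi0 : r 0 ≠ 0 := by
      rcases Nat.eq_zero_or_pos i with h | h
      · rwa [h] at hi
      · exact absurd (hsupp i h) hi
    have hset : {x : GaloisField 2 n | ∑ i ∈ Finset.range 1, r i * x ^ 2 ^ (k * i) = 0}
        = {0} := by
      ext x
      simp [Finset.sum_range_one, mul_eq_zero, hi0]
    rw [hset, Set.ncard_singleton]
    norm_num
  | succ d ih =>
    intro r hsupp hex
    classical
    show {x : GaloisField 2 n | ∑ i ∈ Finset.range (d + 2), r i * x ^ 2 ^ (k * i) = 0}.ncard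
      ≤ 2 ^ (d + 1)
    have htwo : (2 : GaloisField 2 n) = 0 := by
      have := CharP.cast_eq_zero (GaloisField 2 n) 2
      exact_mod_cast this
    set S : Set (GaloisField 2 n) := {x | ∑ i ∈ Finset.range (d + 2), r i * x ^ 2 ^ (k * i) = 0} with hSdef
    by_cases htriv : ∀ x ∈ S, x = 0
    · have hsub : S ⊆ {0} := fun x hx => htriv x hx
      calc S.ncard ≤ ({0} : Set (GaloisField 2 n)).ncard := Set.ncard_le_ncard hsub (Set.finite_singleton 0)
        _ = 1 := Set.ncard_singleton 0
        _ ≤ 2 ^ (d + 1) := Nat.one_le_two_pow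
    · push_neg at htriv
      obtain ⟨a, haS, ha⟩ := htriv
      have haS' : ∑ i ∈ Finset.range (d + 2), r i * a ^ 2 ^ (k * i) = 0 := haS
      set b : GaloisField 2 n := a ^ 2 ^ k * a⁻¹ with hbdef
      set s : ℕ → GaloisField 2 n := sAux k (d + 1) r b with hsdef
      have hsD : ∀ j, d + 1 ≤ j → s j = 0 := fun j hj => sAux_ge k (d + 1) r b j hj
      have hsrec : ∀ j, j < d + 1 → s j = r (j + 1) + s (j + 1) * b ^ 2 ^ (k * (j + 1)) :=
        fun j hj => sAux_rec k (d + 1) r b j hj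
      have hre : ∀ i, 1 ≤ i → i ≤ d + 1 → r i = s (i - 1) + s i * b ^ 2 ^ (k * i) := by
        intro i h1 h2
        have h := hsrec (i - 1) (by omega)
        rw [show i - 1 + 1 = i from by omega] at h
        linear_combination -h - s i * b ^ 2 ^ (k * i) * htwo
      have hQa : a ^ 2 ^ k + b * a = 0 := by
        rw [hbdef, mul_assoc, inv_mul_cancel₀ ha, mul_one]
        linear_combination a ^ 2 ^ k * htwo
      -- main functional identity
      have hQexp : ∀ (x : GaloisField 2 n) (j : ℕ), (x ^ 2 ^ k + b * x) ^ 2 ^ (k * j)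
          = x ^ 2 ^ (k * (j + 1)) + b ^ 2 ^ (k * j) * x ^ 2 ^ (k * j) := by
        intro x j
        rw [add_pow_char_pow, mul_pow, ← pow_mul, ← pow_add, show k + k * j = k * (j + 1) from by ring]
      have hmain : ∀ x : GaloisField 2 n, ∑ i ∈ Finset.range (d + 2), r i * x ^ 2 ^ (k * i)
          = (∑ j ∈ Finset.range (d + 1), s j * (x ^ 2 ^ k + b * x) ^ 2 ^ (k * j))
            + (r 0 + s 0 * b) * x := by
        intro x
        have hL1 : ∑ i ∈ Finset.range (d + 2), r i * x ^ 2 ^ (k * i)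
            = (∑ i ∈ Finset.range (d + 1), r (i + 1) * x ^ 2 ^ (k * (i + 1)))
              + r 0 * x := by
          rw [Finset.sum_range_succ' (fun i => r i * x ^ 2 ^ (k * i)) (d + 1)]
          norm_num
        have hL2 : ∑ i ∈ Finset.range (d + 1), r (i + 1) * x ^ 2 ^ (k * (i + 1))
            = (∑ i ∈ Finset.range (d + 1), s i * x ^ 2 ^ (k * (i + 1)))
              + ∑ i ∈ Finset.range (d + 1), s (i + 1) * b ^ 2 ^ (k * (i + 1)) * x ^ 2 ^ (k * (i + 1)) := by
          rw [← Finset.sum_add_distrib]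
          refine Finset.sum_congr rfl fun i hi => ?_
          rw [Finset.mem_range] at hi
          rw [hre (i + 1) (by omega) (by omega)]
          simp only [Nat.add_sub_cancel]
          ring
        have hC : ∑ i ∈ Finset.range (d + 1), s (i + 1) * b ^ 2 ^ (k * (i + 1)) * x ^ 2 ^ (k * (i + 1))
            = (∑ i ∈ Finset.range (d + 1), s i * b ^ 2 ^ (k * i) * x ^ 2 ^ (k * i))
              + s 0 * b * x := by
          have h2 := Finset.sum_range_succ' (fun i => s i * b ^ 2 ^ (k * i) * x ^ 2 ^ (k * i)) (d + 1)
          have h3 := Finset.sum_range_succ (fun i => s i * b ^ 2 ^ (k * i) * x ^ 2 ^ (k * i)) (d + 1)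
          rw [hsD (d + 1) le_rfl] at h3
          simp only [Nat.mul_zero, pow_zero, pow_one, zero_mul] at h2 h3
          rw [h3, add_zero] at h2
          linear_combination -h2 - s 0 * b * x * htwo
        have hR : ∑ j ∈ Finset.range (d + 1), s j * (x ^ 2 ^ k + b * x) ^ 2 ^ (k * j)
            = (∑ j ∈ Finset.range (d + 1), s j * x ^ 2 ^ (k * (j + 1)))
              + ∑ j ∈ Finset.range (d + 1), s j * b ^ 2 ^ (k * j) * x ^ 2 ^ (k * j) := by
          rw [← Finset.sum_add_distrib]
          refine Finset.sum_congr rfl fun j _ => ?_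
          rw [hQexp x j]
          ring
        rw [hL1, hL2, hC, hR]
        ring
      -- the constant term vanishes
      have hc : r 0 + s 0 * b = 0 := by
        have hQsum : ∑ j ∈ Finset.range (d + 1), s j * (a ^ 2 ^ k + b * a) ^ 2 ^ (k * j) = 0 := by
          rw [hQa]
          refine Finset.sum_eq_zero fun j _ => ?_
          rw [zero_pow (by positivity), mul_zero]
        have h := hmain a
        rw [haS', hQsum, zero_add] at h
        exact (mul_eq_zero.mp h.symm).resolve_right ha
      -- kernel of Q
      have hker : ∀ z : GaloisField 2 n, z ^ 2 ^ k + b * z = 0 → z = 0 ∨ z = a := by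
        intro z hz
        by_cases h0 : z = 0
        · exact Or.inl h0
        · right
          have hz' : z ^ 2 ^ k = b * z := by linear_combination hz - b * z * htwo
          have haq : a ^ 2 ^ k ≠ 0 := pow_ne_zero _ ha
          have hy : (z * a⁻¹) ^ 2 ^ k = z * a⁻¹ := by
            rw [mul_pow, hz', inv_pow, hbdef]
            field_simp
          rcases fixpoint n k hn hkn (z * a⁻¹) hy with h | h
          · exact absurd h (by simp [h0, ha])
          · field_simp at h
            exact h
      -- the target set as a preimage
      set s1 : Set (GaloisField 2 n) := {y | ∑ j ∈ Finset.range (d + 1), s j * y ^ 2 ^ (k * j) = 0} with hs1def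
      have hSeq : S = (fun x : GaloisField 2 n => x ^ 2 ^ k + b * x) ⁻¹' s1 := by
        ext x
        simp only [hSdef, hs1def, Set.mem_setOf_eq, Set.mem_preimage]
        rw [hmain x, hc, zero_mul, add_zero]
      -- s is nonzero and supported in degrees ≤ d
      have hsnz : ∃ j, s j ≠ 0 := by
        by_contra hcon
        push_neg at hcon
        obtain ⟨i, hi⟩ := hex
        apply hi
        rcases Nat.lt_or_ge i 1 with h | h
        · have h0 : i = 0 := by omega
          have := hc
          rw [hcon 0, zero_mul, add_zero] at this
          rwa [h0]
        · rcases le_or_gt i (d + 1) with h' | h'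
          · rw [hre i h h', hcon, hcon, zero_mul, add_zero]
          · exact hsupp i h'
      have hs1card : s1.ncard ≤ 2 ^ d := ih s (fun j hj => hsD j (by omega)) hsnz
      -- cardinality of the preimage
      haveI : Fintype (GaloisField 2 n) := Fintype.ofFinite _
      have hcard : S.ncard ≤ 2 * s1.ncard := by
        rw [Set.ncard_eq_toFinset_card' S, Set.ncard_eq_toFinset_card' s1]
        refine Finset.card_le_mul_card_image_of_maps_to
          (f := fun x : GaloisField 2 n => x ^ 2 ^ k + b * x) ?_ 2 ?_
        · intro x hx
          rw [Set.mem_toFinset] at *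
          rw [hSeq] at hx
          exact hx
        · intro y hy
          by_cases hne : ({x ∈ S.toFinset | x ^ 2 ^ k + b * x = y} : Finset (GaloisField 2 n)).Nonempty
          · obtain ⟨x₀, hx₀⟩ := hne
            have hsub : ({x ∈ S.toFinset | x ^ 2 ^ k + b * x = y} : Finset (GaloisField 2 n))
                ⊆ {x₀, x₀ + a} := by
              intro x hx
              rw [Finset.mem_filter] at hx hx₀
              have hzero : (x + x₀) ^ 2 ^ k + b * (x + x₀) = 0 := by
                rw [add_pow_char_pow]
                linear_combination hx.2 + hx₀.2 + y * htwo
              rcases hker _ hzero with h | h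
              · have : x = x₀ := by linear_combination h - x₀ * htwo
                simp [this]
              · have : x = x₀ + a := by linear_combination h - x₀ * htwo
                simp [this]
            calc ({x ∈ S.toFinset | x ^ 2 ^ k + b * x = y} : Finset (GaloisField 2 n)).card
                ≤ ({x₀, x₀ + a} : Finset (GaloisField 2 n)).card := Finset.card_le_card hsub
              _ ≤ 2 := Finset.card_insert_le _ _ |>.trans (by simp)
          · rw [Finset.not_nonempty_iff_eq_empty] at hne
            rw [hne]
            simp
      calc S.ncard ≤ 2 * s1.ncard := hcard
        _ ≤ 2 * 2 ^ d := Nat.mul_le_mul_left 2 hs1card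
        _ = 2 ^ (d + 1) := (pow_succ 2 d).symm ▸ by ring

end LinAux

/-- A nonzero linearized polynomial `p(x) = ∑ r_i x^{2^{ki}}` of symbolic degree `d`
over `GF(2^n)`, with `gcd(k,n) = 1`, has at most `2^d` roots. -/
theorem stmt_0 (n k d : ℕ) (hn : 0 < n) (hk : 0 < k) (hkn : Nat.gcd k n = 1)
    (r : Fin (d + 1) → GaloisField 2 n) (hr : ∃ i, r i ≠ 0) :
    {x : GaloisField 2 n |
        ∑ i : Fin (d + 1), r i * x ^ 2 ^ (k * (i : ℕ)) = 0}.ncard ≤ 2 ^ d := by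
  classical
  set r' : ℕ → GaloisField 2 n := fun i => if h : i < d + 1 then r ⟨i, h⟩ else 0 with hr'
  have hval : ∀ i : Fin (d + 1), r' (i : ℕ) = r i := by
    intro i
    simp only [hr', i.isLt, dif_pos, Fin.eta]
  have hsum : ∀ x : GaloisField 2 n,
      ∑ i : Fin (d + 1), r i * x ^ 2 ^ (k * (i : ℕ))
        = ∑ i ∈ Finset.range (d + 1), r' i * x ^ 2 ^ (k * i) := by
    intro x
    rw [← Fin.sum_univ_eq_sum_range (fun i => r' i * x ^ 2 ^ (k * i)) (d + 1)]
    exact Finset.sum_congr rfl fun i _ => by rw [hval i]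
  have hset : {x : GaloisField 2 n | ∑ i : Fin (d + 1), r i * x ^ 2 ^ (k * (i : ℕ)) = 0}
      = {x : GaloisField 2 n | ∑ i ∈ Finset.range (d + 1), r' i * x ^ 2 ^ (k * i) = 0} := by
    ext x
    simp only [Set.mem_setOf_eq, hsum x]
  rw [hset]
  refine LinAux.key n k hn hk hkn d r' (fun i hi => ?_) ?_
  · simp only [hr']
    rw [dif_neg (by omega)]
  · obtain ⟨i, hi⟩ := hr
    exact ⟨(i : ℕ), by rw [hval i]; exact hi⟩
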